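/- (Uniqueness and solvability criterion for y in the example.) Let A be a test ring with maximal ideal m, α ∈ m, u ∈ A[[t]] invertible, and set x_{n+1} := (t−α)·u ∈ A[[t]]. Let x₁,…,xₙ ∈ m[[t]]. Then there is at most one y ∈ m[[t]] with y·x_{n+1} + g(x₁,…,xₙ) = 0, and such y exists if and only if g(x₁(α),…,xₙ(α)) = 0, where x_i(α) ∈ m denotes the image of x_i under the A-algebra homomorphism A[[t]] → A sending t to α (well defined because α is nilpotent). -/

import Mathlib

open IsLocalRing

open PowerSeries Finset

private lemma psEvalSum {A : Type*} [CommRing A] {α : A} {N : ℕ} (hN : α ^ N = 0)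
    (p : Polynomial A) : p.eval α = ∑ i ∈ range N, p.coeff i * α ^ i := by
  rw [Polynomial.eval_eq_sum_range'
    (lt_of_lt_of_le (Nat.lt_succ_self _) (le_max_right N (p.natDegree + 1)))]
  refine (Finset.sum_subset (Finset.range_subset_range.2 (le_max_left _ _)) ?_).symm
  intro i hi hni
  have hiN : N ≤ i := Nat.le_of_not_lt (by simpa using hni)
  have hzero : α ^ i = 0 := by
    rw [← Nat.add_sub_cancel' hiN, pow_add, hN, zero_mul]
  simp [hzero]

private noncomputable def psEval {A : Type*} [CommRing A] (α : A) (N : ℕ) (hN : α ^ N = 0)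
    (h0 : N ≠ 0) : PowerSeries A →+* A where
  toFun f := Polynomial.eval α (trunc N f)
  map_one' := by
    obtain ⟨M, rfl⟩ := Nat.exists_eq_succ_of_ne_zero h0
    show Polynomial.eval α (trunc (M + 1) 1) = 1
    rw [trunc_one, Polynomial.eval_one]
  map_zero' := by
    show Polynomial.eval α (trunc N 0) = 0
    rw [map_zero, Polynomial.eval_zero]
  map_add' f g := by
    show Polynomial.eval α (trunc N (f + g)) = _
    rw [map_add, Polynomial.eval_add]
  map_mul' f g := by
    show Polynomial.eval α (trunc N (f * g)) = _
    rw [← Polynomial.eval_mul, psEvalSum hN, psEvalSum hN]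
    refine Finset.sum_congr rfl fun i hi => ?_
    rw [PowerSeries.coeff_trunc, if_pos (mem_range.mp hi),
      coeff_mul_eq_coeff_trunc_mul_trunc f g (mem_range.mp hi),
      ← Polynomial.coe_mul, Polynomial.coeff_coe]

private lemma psEval_apply {A : Type*} [CommRing A] (α : A) (N : ℕ) (hN : α ^ N = 0)
    (h0 : N ≠ 0) (f : PowerSeries A) :
    psEval α N hN h0 f = ∑ i ∈ range N, PowerSeries.coeff i f * α ^ i := by
  show Polynomial.eval α (trunc N f) = _
  rw [psEvalSum hN]
  exact Finset.sum_congr rfl fun i hi => by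
    rw [PowerSeries.coeff_trunc, if_pos (mem_range.mp hi)]

private lemma psEval_C {A : Type*} [CommRing A] (α : A) (N : ℕ) (hN : α ^ N = 0)
    (h0 : N ≠ 0) (a : A) : psEval α N hN h0 (PowerSeries.C a) = a := by
  obtain ⟨M, rfl⟩ := Nat.exists_eq_succ_of_ne_zero h0
  show Polynomial.eval α (trunc (M + 1) (PowerSeries.C a)) = a
  rw [trunc_C, Polynomial.eval_C]

private lemma psEval_X {A : Type*} [CommRing A] (α : A) (N : ℕ) (hN : α ^ N = 0)
    (h0 : N ≠ 0) : psEval α N hN h0 PowerSeries.X = α := by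
  rw [psEval_apply]
  have : ∀ i : ℕ, PowerSeries.coeff i (PowerSeries.X : PowerSeries A) * α ^ i
      = if i = 1 then α ^ i else 0 := fun i => by
    rw [PowerSeries.coeff_X]; split <;> simp
  rw [Finset.sum_congr rfl fun i _ => this i, Finset.sum_ite_eq' (range N) 1 (fun i => α ^ i)]
  by_cases h1 : 1 < N
  · rw [if_pos (mem_range.mpr h1), pow_one]
  · have hN1 : N = 1 := by omega
    subst hN1
    rw [pow_one] at hN
    simp [hN]

private lemma shift_sum {A : Type*} [CommRing A] {α : A} {N : ℕ} (hN : α ^ N = 0) (c : ℕ → A) :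
    ∑ i ∈ range N, α ^ (i + 1) * c (i + 1) = (∑ i ∈ range N, α ^ i * c i) - c 0 := by
  have h1 := Finset.sum_range_succ (fun i => α ^ i * c i) N
  have h2 := Finset.sum_range_succ' (fun i => α ^ i * c i) N
  simp only [hN, zero_mul, add_zero, pow_zero, one_mul] at h1 h2
  rw [h1] at h2
  linear_combination -h2

private lemma ps_div {A : Type*} [CommRing A] {α : A} {N : ℕ} (hN : α ^ N = 0)
    {G : PowerSeries A} (hG : ∑ i ∈ range N, α ^ i * PowerSeries.coeff i G = 0) :
    (PowerSeries.X - PowerSeries.C α) *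
      PowerSeries.mk (fun j => ∑ i ∈ range N, α ^ i * PowerSeries.coeff (j + i + 1) G) = G := by
  ext j
  rw [sub_mul, map_sub]
  cases j with
  | zero =>
    rw [PowerSeries.coeff_zero_X_mul, PowerSeries.coeff_C_mul, PowerSeries.coeff_mk]
    have e2 : α * ∑ i ∈ Finset.range N, α ^ i * PowerSeries.coeff (0 + i + 1) G
        = ∑ i ∈ Finset.range N, α ^ (i + 1) * PowerSeries.coeff (i + 1) G := by
      rw [Finset.mul_sum]
      exact Finset.sum_congr rfl fun i _ => by
        rw [show 0 + i + 1 = i + 1 by omega, pow_succ', mul_assoc]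
    have hs := shift_sum hN (fun i => PowerSeries.coeff i G)
    linear_combination -e2 - hs - hG
  | succ j =>
    rw [PowerSeries.coeff_succ_X_mul, PowerSeries.coeff_C_mul, PowerSeries.coeff_mk,
      PowerSeries.coeff_mk]
    have e1 : ∑ i ∈ Finset.range N, α ^ i * PowerSeries.coeff (j + i + 1) G
        = ∑ i ∈ Finset.range N, α ^ i * PowerSeries.coeff (j + 1 + i) G :=
      Finset.sum_congr rfl fun i _ => by rw [show j + i + 1 = j + 1 + i by omega]
    have e2 : α * ∑ i ∈ Finset.range N, α ^ i * PowerSeries.coeff (j + 1 + i + 1) G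
        = ∑ i ∈ Finset.range N, α ^ (i + 1) * PowerSeries.coeff (j + 1 + (i + 1)) G := by
      rw [Finset.mul_sum]
      exact Finset.sum_congr rfl fun i _ => by
        rw [show j + 1 + i + 1 = j + 1 + (i + 1) by omega, pow_succ', mul_assoc]
    have hs := shift_sum hN (fun i => PowerSeries.coeff (j + 1 + i) G)
    simp only [add_zero] at hs
    linear_combination e1 - e2 - hs

private lemma coeff_mul_mem {A : Type*} [CommRing A] {I : Ideal A} {f : PowerSeries A}
    (hf : ∀ j, PowerSeries.coeff j f ∈ I) (h : PowerSeries A) (j : ℕ) :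
    PowerSeries.coeff j (h * f) ∈ I := by
  rw [PowerSeries.coeff_mul]
  exact Ideal.sum_mem _ fun p _ => Ideal.mul_mem_left _ _ (hf p.2)

private lemma coeff_aeval_mem {k : Type*} [Field k] {n : ℕ} {A : Type*} [CommRing A]
    [Algebra k A] {I : Ideal A} (x : Fin n → PowerSeries A)
    (hx : ∀ i j, PowerSeries.coeff j (x i) ∈ I) (g : MvPolynomial (Fin n) k)
    (hg : MvPolynomial.constantCoeff g = 0) (j : ℕ) :
    PowerSeries.coeff j (MvPolynomial.aeval x g) ∈ I := by
  have main : ∀ p : MvPolynomial (Fin n) k, ∀ j, PowerSeries.coeff j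
      (MvPolynomial.aeval x p
        - PowerSeries.C (algebraMap k A (MvPolynomial.constantCoeff p))) ∈ I := by
    intro p
    induction p using MvPolynomial.induction_on with
    | C a =>
      intro j
      simp [PowerSeries.algebraMap_apply]
    | add p q hp hq =>
      intro j
      have e : MvPolynomial.aeval x (p + q)
          - PowerSeries.C (algebraMap k A (MvPolynomial.constantCoeff (p + q)))
          = (MvPolynomial.aeval x p
              - PowerSeries.C (algebraMap k A (MvPolynomial.constantCoeff p)))
            + (MvPolynomial.aeval x q
              - PowerSeries.C (algebraMap k A (MvPolynomial.constantCoeff q))) := by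
        simp only [map_add]; ring
      rw [e, map_add]
      exact Ideal.add_mem I (hp j) (hq j)
    | mul_X p i hp =>
      intro j
      have e : MvPolynomial.aeval x (p * MvPolynomial.X i)
          - PowerSeries.C (algebraMap k A
              (MvPolynomial.constantCoeff (p * MvPolynomial.X i)))
          = MvPolynomial.aeval x p * x i := by
        simp [MvPolynomial.constantCoeff_X]
      rw [e]
      exact coeff_mul_mem (hx i) _ j
  have := main g j
  rw [hg] at this
  simpa using this

/-- **Uniqueness and solvability criterion for `y` in the example.**
Let `A` be a test ring with maximal ideal `m`, `α ∈ m`, `u ∈ A[[t]]` invertible, and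
`x_{n+1} := (t−α)·u`.  Let `x₁,…,xₙ ∈ m[[t]]`.  Then there is at most one `y ∈ m[[t]]`
with `y·x_{n+1} + g(x₁,…,xₙ) = 0`, and such `y` exists iff `g(x₁(α),…,xₙ(α)) = 0`,
where `x_i(α)` is the image of `x_i` under the `A`-algebra map `A[[t]] → A`, `t ↦ α`
(computed via truncation, using that `α` is nilpotent: `α^N = 0`). -/
theorem hypersurface_example_solvability {k : Type*} [Field k] {n : ℕ} (hn : 1 ≤ n)
    (g : MvPolynomial (Fin n) k) (hg : MvPolynomial.constantCoeff g = 0)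
    (A : Type*) [CommRing A] [Algebra k A] [IsLocalRing A]
    (hnil : IsNilpotent (maximalIdeal A))
    (hres : Function.Bijective (algebraMap k (ResidueField A)))
    (α : A) (hα : α ∈ maximalIdeal A) (N : ℕ) (hN : α ^ N = 0)
    (u : PowerSeries A) (hu : IsUnit u)
    (x : Fin n → PowerSeries A)
    (hx : ∀ i j, PowerSeries.coeff j (x i) ∈ maximalIdeal A) :
    (∀ y y' : PowerSeries A,
      ((∀ j, PowerSeries.coeff j y ∈ maximalIdeal A) ∧
        y * ((PowerSeries.X - PowerSeries.C α) * u) + MvPolynomial.aeval x g = 0) →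
      ((∀ j, PowerSeries.coeff j y' ∈ maximalIdeal A) ∧
        y' * ((PowerSeries.X - PowerSeries.C α) * u) + MvPolynomial.aeval x g = 0) →
      y = y') ∧
    ((∃ y : PowerSeries A,
        (∀ j, PowerSeries.coeff j y ∈ maximalIdeal A) ∧
        y * ((PowerSeries.X - PowerSeries.C α) * u) + MvPolynomial.aeval x g = 0) ↔
      MvPolynomial.aeval (fun i => Polynomial.eval α (PowerSeries.trunc N (x i))) g = 0) := by
  classical
  have h0 : N ≠ 0 := by
    rintro rfl
    rw [pow_zero] at hN
    exact one_ne_zero hN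
  obtain ⟨v, hv⟩ := hu
  -- regularity of X - C α
  have reg : ∀ f : PowerSeries A,
      f * (PowerSeries.X - PowerSeries.C α) = 0 → f = 0 := by
    intro f hf
    have hstep : ∀ j, PowerSeries.coeff j f = α * PowerSeries.coeff (j + 1) f := by
      intro j
      have h := congrArg (PowerSeries.coeff (j + 1)) hf
      rw [mul_sub, map_sub, PowerSeries.coeff_mul_C, mul_comm f PowerSeries.X,
        PowerSeries.coeff_succ_X_mul, map_zero, sub_eq_zero] at h
      rw [h, mul_comm]
    have hpow : ∀ M j, PowerSeries.coeff j f = α ^ M * PowerSeries.coeff (j + M) f := by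
      intro M
      induction M with
      | zero => intro j; simp
      | succ M ih =>
        intro j
        rw [hstep j, ih (j + 1), ← mul_assoc, ← pow_succ',
          show j + 1 + M = j + (M + 1) by omega]
    ext j
    rw [hpow N j, hN, zero_mul, map_zero]
  -- evaluation homomorphism
  set φ := psEval α N hN h0 with hφdef
  have hcomp : φ.comp (algebraMap k (PowerSeries A)) = algebraMap k A :=
    RingHom.ext fun a => by
      rw [RingHom.comp_apply, PowerSeries.algebraMap_apply, hφdef, psEval_C]
  have hφalg : ∀ p : MvPolynomial (Fin n) k,
      φ (MvPolynomial.aeval x p)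
        = MvPolynomial.aeval (fun i => Polynomial.eval α (PowerSeries.trunc N (x i))) p := by
    intro p
    rw [MvPolynomial.aeval_def, MvPolynomial.eval₂_comp_left φ, hcomp,
      MvPolynomial.aeval_def]
    rfl
  have hφXCu : φ ((PowerSeries.X - PowerSeries.C α) * u) = 0 := by
    rw [map_mul, map_sub, hφdef, psEval_X, psEval_C, sub_self, zero_mul]
  set G := MvPolynomial.aeval x g with hGdef
  have hGm : ∀ j, PowerSeries.coeff j G ∈ IsLocalRing.maximalIdeal A :=
    coeff_aeval_mem x hx g hg
  constructor
  · -- uniqueness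
    rintro y y' ⟨-, hy⟩ ⟨-, hy'⟩
    have h : (y - y') * ((PowerSeries.X - PowerSeries.C α) * u) = 0 := by
      linear_combination hy - hy'
    have h3 : (y - y') * (PowerSeries.X - PowerSeries.C α) = 0 := by
      have h4 := congrArg (fun z => z * (↑v⁻¹ : PowerSeries A)) h
      simp only [zero_mul] at h4
      calc (y - y') * (PowerSeries.X - PowerSeries.C α)
          = (y - y') * ((PowerSeries.X - PowerSeries.C α) * u) * ↑v⁻¹ := by
            rw [← hv, mul_assoc, mul_assoc, Units.mul_inv, mul_one]
        _ = 0 := h4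
    exact sub_eq_zero.mp (reg _ h3)
  constructor
  · -- existence implies criterion
    rintro ⟨y, -, hy⟩
    have h := congrArg φ hy
    rw [map_add, map_mul, hφXCu, mul_zero, zero_add, map_zero] at h
    rw [← hφalg g]
    exact h
  · -- criterion implies existence
    intro hval
    have hφG : φ G = 0 := by rw [hGdef, hφalg g]; exact hval
    have hsum : ∑ i ∈ Finset.range N, α ^ i * PowerSeries.coeff i G = 0 := by
      rw [← hφG, hφdef, psEval_apply]
      exact Finset.sum_congr rfl fun i _ => mul_comm _ _
    set q : PowerSeries A :=
      PowerSeries.mk fun j => ∑ i ∈ Finset.range N, α ^ i * PowerSeries.coeff (j + i + 1) G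
      with hqdef
    have hq : (PowerSeries.X - PowerSeries.C α) * q = G := ps_div hN hsum
    have hqm : ∀ j, PowerSeries.coeff j q ∈ IsLocalRing.maximalIdeal A := fun j => by
      rw [hqdef, PowerSeries.coeff_mk]
      exact Ideal.sum_mem _ fun i _ => Ideal.mul_mem_left _ _ (hGm _)
    refine ⟨-(q * ↑v⁻¹), fun j => ?_, ?_⟩
    · rw [map_neg]
      exact neg_mem (by rw [mul_comm]; exact coeff_mul_mem hqm _ j)
    · have huv : (↑v⁻¹ : PowerSeries A) * u = 1 := by rw [← hv]; exact v.inv_mul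
      calc -(q * ↑v⁻¹) * ((PowerSeries.X - PowerSeries.C α) * u) + G
          = -((PowerSeries.X - PowerSeries.C α) * q) * ((↑v⁻¹ : PowerSeries A) * u) + G := by
            ring
        _ = 0 := by rw [hq, huv, mul_one, neg_add_cancel]
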